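/- Backprojection inversion formula: let f : ℝ² → ℂ be a Schwartz function. For θ ∈ ℝ define R_θ f(t) = ∫_ℝ f(t·u_θ + s·v_θ) ds. Then for every x ∈ ℝ², f(x) = ∫₀^{π} ∫_ℝ (R_θ f)^(t) · |t| · e^{2πi t ⟨x, u_θ⟩} dt dθ, where (R_θ f)^ denotes the one-dimensional Fourier transform of R_θ f. -/

import Mathlib

open MeasureTheory Real RealInnerProductSpace

/-- The unit vector u_θ = (cos θ, sin θ) in ℝ². -/
noncomputable def uVec (θ : ℝ) : EuclideanSpace ℝ (Fin 2) :=
  (WithLp.equiv 2 (Fin 2 → ℝ)).symm ![Real.cos θ, Real.sin θ]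

/-- The unit vector v_θ = u_{θ+π/2} = (−sin θ, cos θ) in ℝ². -/
noncomputable def vVec (θ : ℝ) : EuclideanSpace ℝ (Fin 2) :=
  (WithLp.equiv 2 (Fin 2 → ℝ)).symm ![-Real.sin θ, Real.cos θ]

/-- The radialization η²(x) = (1/(2π)) ∫₀^{2π} η(⟨x,u_θ⟩) η(⟨x,v_θ⟩) dθ. -/
noncomputable def radialization (η : ℝ → ℝ) (x : EuclideanSpace ℝ (Fin 2)) : ℝ :=
  (1 / (2 * π)) * ∫ θ in (0:ℝ)..(2 * π), η ⟪x, uVec θ⟫ * η ⟪x, vVec θ⟫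

open FourierTransform

/-- The Radon projection R_θ f(t) = ∫ f(t u_θ + s v_θ) ds. -/
noncomputable def radon (f : EuclideanSpace ℝ (Fin 2) → ℂ) (θ : ℝ) (t : ℝ) : ℂ :=
  ∫ s : ℝ, f (t • uVec θ + s • vVec θ)

/-! ### Auxiliary lemmas -/

section Aux

lemma orthonormal_uv (θ : ℝ) : Orthonormal ℝ ![uVec θ, vVec θ] := by
  rw [orthonormal_iff_ite]
  intro i j
  fin_cases i <;> fin_cases j <;>
    simp [uVec, vVec, PiLp.inner_apply, Fin.sum_univ_two, RCLike.inner_apply, -inner_self_eq_norm_sq_to_K] <;>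
    first
      | (rw [← Real.cos_sq_add_sin_sq θ]; ring)
      | ring

noncomputable def onb (θ : ℝ) : OrthonormalBasis (Fin 2) ℝ (EuclideanSpace ℝ (Fin 2)) :=
  OrthonormalBasis.mk (orthonormal_uv θ) (by
    have h := ((orthonormal_uv θ).linearIndependent).span_eq_top_of_card_eq_finrank
      (by simp [finrank_euclideanSpace_fin])
    rw [h])

lemma onb_apply (θ : ℝ) (i : Fin 2) : onb θ i = ![uVec θ, vVec θ] i := by
  simp [onb]

noncomputable def mequiv (θ : ℝ) : (ℝ × ℝ) ≃ᵐ EuclideanSpace ℝ (Fin 2) :=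
  MeasurableEquiv.finTwoArrow.symm.trans <|
    (MeasurableEquiv.toLp 2 (Fin 2 → ℝ)).trans
      (onb θ).repr.toHomeomorph.toMeasurableEquiv.symm

lemma mequiv_apply (θ : ℝ) (p : ℝ × ℝ) :
    mequiv θ p = p.1 • uVec θ + p.2 • vVec θ := by
  have : mequiv θ p = (onb θ).repr.symm
      ((MeasurableEquiv.toLp 2 (Fin 2 → ℝ)) (MeasurableEquiv.finTwoArrow.symm p)) := rfl
  rw [this, ← (onb θ).sum_repr_symm]
  simp [Fin.sum_univ_two, onb_apply, MeasurableEquiv.finTwoArrow, finTwoArrowEquiv,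
    MeasurableEquiv.coe_toLp]

lemma measurePreserving_mequiv (θ : ℝ) :
    MeasurePreserving (mequiv θ) volume volume :=
  ((onb θ).measurePreserving_repr_symm.comp
    (((EuclideanSpace.volume_preserving_symm_measurableEquiv_toLp (Fin 2)).symm _).comp
      ((volume_preserving_finTwoArrow ℝ).symm _)))

lemma integral_mequiv (θ : ℝ) (F : EuclideanSpace ℝ (Fin 2) → ℂ) :
    ∫ y, F y = ∫ p : ℝ × ℝ, F (p.1 • uVec θ + p.2 • vVec θ) := by
  rw [← (measurePreserving_mequiv θ).integral_comp' F]
  simp_rw [mequiv_apply]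

lemma integrable_mequiv {F : EuclideanSpace ℝ (Fin 2) → ℂ} (hF : Integrable F) (θ : ℝ) :
    Integrable (fun p : ℝ × ℝ => F (p.1 • uVec θ + p.2 • vVec θ)) := by
  have h := ((measurePreserving_mequiv θ).integrable_comp_emb
    (mequiv θ).measurableEmbedding).2 hF
  have : (F ∘ mequiv θ) = fun p : ℝ × ℝ => F (p.1 • uVec θ + p.2 • vVec θ) := by
    funext p; simp [Function.comp, mequiv_apply]
  rwa [this] at h

lemma inner_uVec_self (θ : ℝ) : ⟪uVec θ, uVec θ⟫ = (1:ℝ) := by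
  simp [uVec, PiLp.inner_apply, Fin.sum_univ_two, RCLike.inner_apply, -inner_self_eq_norm_sq_to_K]
  rw [← Real.cos_sq_add_sin_sq θ]; ring
lemma inner_uVec_vVec (θ : ℝ) : ⟪uVec θ, vVec θ⟫ = (0:ℝ) := by
  simp [uVec, vVec, PiLp.inner_apply, Fin.sum_univ_two, RCLike.inner_apply]; ring
lemma inner_vVec_self (θ : ℝ) : ⟪vVec θ, vVec θ⟫ = (1:ℝ) := by
  simp [vVec, PiLp.inner_apply, Fin.sum_univ_two, RCLike.inner_apply, -inner_self_eq_norm_sq_to_K]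
  rw [← Real.cos_sq_add_sin_sq θ]; ring
lemma inner_vVec_uVec (θ : ℝ) : ⟪vVec θ, uVec θ⟫ = (0:ℝ) := by
  rw [real_inner_comm]; exact inner_uVec_vVec θ

lemma inner_rot (θ t : ℝ) (p : ℝ × ℝ) :
    ⟪p.1 • uVec θ + p.2 • vVec θ, t • uVec θ⟫ = (⟪p.1, t⟫ : ℝ) := by
  simp only [inner_add_left, real_inner_smul_left, real_inner_smul_right,
    inner_uVec_self, inner_uVec_vVec, inner_vVec_self, inner_vVec_uVec, RCLike.inner_apply,
    starRingEnd_apply, star_trivial]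
  ring

/-- Fourier slice theorem: the 1-D Fourier transform of the Radon projection is the
2-D Fourier transform along the ray. -/
lemma fourier_slice (f : SchwartzMap (EuclideanSpace ℝ (Fin 2)) ℂ) (θ t : ℝ) :
    𝓕 (radon (⇑f) θ) t = 𝓕 (⇑f) (t • uVec θ) := by
  have hInt : Integrable (fun p : ℝ × ℝ =>
      𝐞 (-⟪p.1, t⟫) • f (p.1 • uVec θ + p.2 • vVec θ)) := by
    have hbase := integrable_mequiv f.integrable θ
    simp_rw [Circle.smul_def]
    refine hbase.bdd_mul (c := 1) ?_ (Filter.Eventually.of_forall fun p => (Circle.norm_coe _).le)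
    refine Continuous.aestronglyMeasurable ?_
    have hc : (fun p : ℝ × ℝ => -(⟪p.1, t⟫ : ℝ)) = fun p => -(p.1 * t) := by
      funext p; simp [RCLike.inner_apply, mul_comm]
    refine continuous_induced_dom.comp (Real.continuous_fourierChar.comp ?_)
    rw [hc]; fun_prop
  rw [Real.fourier_eq, Real.fourier_eq]
  have h1 : ∀ v : ℝ, 𝐞 (-⟪v, t⟫) • radon (⇑f) θ v
      = ∫ s : ℝ, 𝐞 (-⟪v, t⟫) • f (v • uVec θ + s • vVec θ) := by
    intro v
    rw [radon, Circle.smul_def, smul_eq_mul, ← integral_const_mul]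
    simp_rw [Circle.smul_def, smul_eq_mul]
  simp_rw [h1]
  rw [show (volume : Measure ℝ) = volume from rfl, MeasureTheory.integral_integral (by
    rw [← Measure.volume_eq_prod]; exact hInt)]
  rw [← Measure.volume_eq_prod,
    integral_mequiv θ (fun y => 𝐞 (-⟪y, t • uVec θ⟫) • f y)]
  exact integral_congr_ae (Filter.Eventually.of_forall fun p => by
    dsimp only; rw [inner_rot])

open Set

lemma hasFDerivAt_polarMap (p : ℝ × ℝ) :
    HasFDerivAt (fun q : ℝ × ℝ => (q.2 * Real.cos q.1, q.2 * Real.sin q.1))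
      (LinearMap.toContinuousLinearMap (Matrix.toLin (Module.Basis.finTwoProd ℝ) (Module.Basis.finTwoProd ℝ)
        !![-p.2 * Real.sin p.1, Real.cos p.1; p.2 * Real.cos p.1, Real.sin p.1])) p := by
  rw [Matrix.toLin_finTwoProd_toContinuousLinearMap]
  convert HasFDerivAt.prodMk (𝕜 := ℝ)
    (hasFDerivAt_snd.mul ((hasDerivAt_cos p.1).comp_hasFDerivAt p hasFDerivAt_fst))
    (hasFDerivAt_snd.mul ((hasDerivAt_sin p.1).comp_hasFDerivAt p hasFDerivAt_fst)) using 2 <;> (try rfl) <;>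
  simp [smul_smul, add_comm, neg_mul, smul_neg, neg_smul _ (ContinuousLinearMap.fst ℝ ℝ ℝ)]

lemma polarMap_image_mem {a b : ℝ} (hb : 0 < b) :
    (a, b) ∈ (fun q : ℝ × ℝ => (q.2 * Real.cos q.1, q.2 * Real.sin q.1)) ''
      (Ioo 0 π ×ˢ ({(0:ℝ)}ᶜ)) := by
  set z : ℂ := Complex.mk a b with hz
  have hzim : z.im = b := rfl
  have hzre : z.re = a := rfl
  have hz0 : z ≠ 0 := fun h => by simp [hz, Complex.ext_iff] at h; exact hb.ne' h.2
  have habs : ‖z‖ ≠ 0 := norm_ne_zero_iff.mpr hz0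
  refine ⟨(Complex.arg z, ‖z‖), ⟨⟨?_, ?_⟩, ?_⟩, ?_⟩
  · rcases lt_or_eq_of_le (Complex.arg_nonneg_iff.2 (by rw [hzim]; exact hb.le)) with h | h
    · exact h
    · exfalso
      have := Complex.arg_eq_zero_iff.1 h.symm
      rw [hzim] at this; exact hb.ne' this.2
  · exact Complex.arg_lt_pi_iff.2 (Or.inr (by rw [hzim]; exact hb.ne'))
  · simpa using habs
  · have hc := Complex.cos_arg hz0
    have hs := Complex.sin_arg z
    simp only [hc, hs, hzre, hzim]
    field_simp

lemma polarMap_image_ae :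
    (fun q : ℝ × ℝ => (q.2 * Real.cos q.1, q.2 * Real.sin q.1)) ''
      (Ioo 0 π ×ˢ ({(0:ℝ)}ᶜ)) =ᵐ[volume] univ := by
  rw [ae_eq_univ]
  have hsub : ((fun q : ℝ × ℝ => (q.2 * Real.cos q.1, q.2 * Real.sin q.1)) ''
      (Ioo 0 π ×ˢ ({(0:ℝ)}ᶜ)))ᶜ ⊆ (univ : Set ℝ) ×ˢ {(0:ℝ)} := by
    intro ⟨a, b⟩ h
    simp only [mem_compl_iff] at h
    by_contra hb
    simp only [mem_prod, mem_univ, mem_singleton_iff, true_and] at hb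
    rcases lt_or_gt_of_ne hb with h1 | h1
    · obtain ⟨⟨θ, t⟩, hmem, heq⟩ := polarMap_image_mem (a := -a) (neg_pos.2 h1)
      exact h ⟨(θ, -t), ⟨hmem.1, by simpa using hmem.2⟩, by
        simp only [Prod.ext_iff] at heq ⊢
        constructor
        · simpa [neg_mul] using congrArg Neg.neg heq.1
        · simpa [neg_mul] using congrArg Neg.neg heq.2⟩
    · exact h (polarMap_image_mem h1)
  refine measure_mono_null hsub ?_
  rw [Measure.volume_eq_prod, Measure.prod_prod]
  simp

lemma polarMap_injOn :
    InjOn (fun q : ℝ × ℝ => (q.2 * Real.cos q.1, q.2 * Real.sin q.1))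
      (Ioo 0 π ×ˢ ({(0:ℝ)}ᶜ)) := by
  rintro ⟨θ₁, t₁⟩ ⟨h1, h1'⟩ ⟨θ₂, t₂⟩ ⟨h2, h2'⟩ heq
  simp only [mem_Ioo] at h1 h2
  simp only [mem_compl_iff, mem_singleton_iff] at h1' h2'
  simp only [Prod.ext_iff] at heq
  obtain ⟨hc, hs⟩ := heq
  have hsin1 : 0 < Real.sin θ₁ := Real.sin_pos_of_pos_of_lt_pi h1.1 h1.2
  have hsin2 : 0 < Real.sin θ₂ := Real.sin_pos_of_pos_of_lt_pi h2.1 h2.2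
  have hsq : t₁ ^ 2 = t₂ ^ 2 := by
    have e1 : t₁ ^ 2 = (t₁ * Real.cos θ₁) ^ 2 + (t₁ * Real.sin θ₁) ^ 2 := by
      have := Real.cos_sq_add_sin_sq θ₁; nlinarith
    have e2 : t₂ ^ 2 = (t₂ * Real.cos θ₂) ^ 2 + (t₂ * Real.sin θ₂) ^ 2 := by
      have := Real.cos_sq_add_sin_sq θ₂; nlinarith
    rw [e1, e2, hc, hs]
  have ht : t₁ = t₂ := by
    rcases sq_eq_sq_iff_eq_or_eq_neg.1 hsq with h | h
    · exact h
    · exfalso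
      rw [h] at hs
      have h0 : t₂ * (Real.sin θ₂ + Real.sin θ₁) = 0 := by linear_combination -hs
      rcases mul_eq_zero.1 h0 with h' | h'
      · exact h2' h'
      · linarith
  subst ht
  have hcos : Real.cos θ₁ = Real.cos θ₂ := by
    exact mul_left_cancel₀ h1' hc
  have : θ₁ = θ₂ := Real.injOn_cos ⟨h1.1.le, h1.2.le⟩ ⟨h2.1.le, h2.2.le⟩ hcos
  simp [this]

lemma polar_cov (H : ℝ × ℝ → ℂ) (hH : Integrable H) :
    ∫ p : ℝ × ℝ, H p
      = ∫ θ in (0:ℝ)..π, ∫ t : ℝ, |t| • H (t * Real.cos θ, t * Real.sin θ) := by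
  set s : Set (ℝ × ℝ) := Ioo 0 π ×ˢ ({(0:ℝ)}ᶜ) with hs_def
  have hs : MeasurableSet s := measurableSet_Ioo.prod (measurableSet_singleton 0).compl
  set Φ : ℝ × ℝ → ℝ × ℝ := fun q => (q.2 * Real.cos q.1, q.2 * Real.sin q.1) with hΦ
  set B : ℝ × ℝ → ℝ × ℝ →L[ℝ] ℝ × ℝ := fun p =>
    LinearMap.toContinuousLinearMap (Matrix.toLin (Module.Basis.finTwoProd ℝ) (Module.Basis.finTwoProd ℝ)
      !![-p.2 * Real.sin p.1, Real.cos p.1; p.2 * Real.cos p.1, Real.sin p.1]) with hB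
  have hder : ∀ p ∈ s, HasFDerivWithinAt Φ (B p) s p := fun p _ =>
    (hasFDerivAt_polarMap p).hasFDerivWithinAt
  have hBdet : ∀ p, (B p).det = -p.2 := by
    intro p
    simp only [hB, neg_mul, LinearMap.det_toContinuousLinearMap, LinearMap.det_toLin,
      Matrix.det_fin_two_of]
    linear_combination (-p.2) * (Real.sin_sq_add_cos_sq p.1)
  have step1 : ∫ p : ℝ × ℝ, H p = ∫ p in Φ '' s, H p := by
    rw [← setIntegral_univ]
    exact (setIntegral_congr_set polarMap_image_ae).symm
  have step2 : ∫ p in Φ '' s, H p = ∫ p in s, |(B p).det| • H (Φ p) :=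
    integral_image_eq_integral_abs_det_fderiv_smul volume hs hder polarMap_injOn H
  have step3 : ∫ p in s, |(B p).det| • H (Φ p) = ∫ p in s, |p.2| • H (Φ p) := by
    refine setIntegral_congr_fun hs fun p _ => ?_
    rw [hBdet, abs_neg]
  have hIntOn : IntegrableOn (fun p => |p.2| • H (Φ p)) s volume := by
    have h1 : IntegrableOn H (Φ '' s) volume := hH.integrableOn
    have h2 := (integrableOn_image_iff_integrableOn_abs_det_fderiv_smul volume hs hder
      polarMap_injOn H).1 h1
    refine h2.congr_fun (fun p _ => ?_) hs
    beta_reduce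
    rw [hBdet, abs_neg]
  have step4 : ∫ p in s, |p.2| • H (Φ p)
      = ∫ θ in Ioo (0:ℝ) π, ∫ t in ({(0:ℝ)}ᶜ), |t| • H (t * Real.cos θ, t * Real.sin θ) := by
    rw [hs_def, Measure.volume_eq_prod]
    rw [setIntegral_prod _ (by rw [← Measure.volume_eq_prod]; exact hIntOn)]
  have step5 : ∀ θ : ℝ, ∫ t in ({(0:ℝ)}ᶜ), |t| • H (t * Real.cos θ, t * Real.sin θ)
      = ∫ t : ℝ, |t| • H (t * Real.cos θ, t * Real.sin θ) := by
    intro θ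
    have he : ({(0:ℝ)}ᶜ : Set ℝ) =ᵐ[volume] (univ : Set ℝ) := by
      rw [ae_eq_univ, compl_compl]; simp
    exact (setIntegral_congr_set he).trans (by rw [setIntegral_univ])
  rw [step1, step2, step3, step4]
  simp_rw [step5]
  rw [intervalIntegral.integral_of_le Real.pi_pos.le]
  exact setIntegral_congr_set Ioo_ae_eq_Ioc

lemma coord_rot (θ t : ℝ) :
    ((t * Real.cos θ) • uVec 0 + (t * Real.sin θ) • vVec 0 : EuclideanSpace ℝ (Fin 2))
      = t • uVec θ := by
  ext i
  fin_cases i <;>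
    simp [uVec, vVec, PiLp.smul_apply, PiLp.add_apply]

end Aux

/-- backprojection inversion formula: for a Schwartz function f on ℝ² and
every x ∈ ℝ², f(x) = ∫₀^π ∫_ℝ (R_θ f)^(t) |t| e^{2πit⟨x,u_θ⟩} dt dθ. -/
theorem backprojection_inversion (f : SchwartzMap (EuclideanSpace ℝ (Fin 2)) ℂ)
    (x : EuclideanSpace ℝ (Fin 2)) :
    f x = ∫ θ in (0:ℝ)..π, ∫ t : ℝ,
      𝓕 (radon (fun y => f y) θ) t * (|t| : ℝ) *
        Complex.exp (2 * (π : ℂ) * Complex.I * (t : ℂ) * ((⟪x, uVec θ⟫ : ℝ) : ℂ)) := by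
  have hg_int : Integrable (𝓕 ⇑f) := by
    have hcoe : (𝓕 ⇑f) = ⇑(𝓕 f : SchwartzMap (EuclideanSpace ℝ (Fin 2)) ℂ) :=
      (SchwartzMap.fourier_coe f).symm
    rw [hcoe]; exact (𝓕 f : SchwartzMap (EuclideanSpace ℝ (Fin 2)) ℂ).integrable
  have hinv : f x = ∫ v, 𝐞 ⟪v, x⟫ • (𝓕 ⇑f) v := by
    have h1 := f.continuous.fourierInv_fourier_eq f.integrable hg_int
    conv_lhs => rw [← congrFun h1 x]
    rw [Real.fourierInv_eq]
  set h : EuclideanSpace ℝ (Fin 2) → ℂ := fun ω => 𝐞 ⟪ω, x⟫ • (𝓕 ⇑f) ω with hh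
  have hh_int : Integrable h := by
    simp_rw [hh, Circle.smul_def]
    refine hg_int.bdd_mul (c := 1) ?_ (Filter.Eventually.of_forall fun p => (Circle.norm_coe _).le)
    refine Continuous.aestronglyMeasurable ?_
    refine continuous_induced_dom.comp (Real.continuous_fourierChar.comp ?_)
    exact continuous_id.inner continuous_const
  set H : ℝ × ℝ → ℂ := fun p => h (p.1 • uVec 0 + p.2 • vVec 0) with hH
  have hH_int : Integrable H := integrable_mequiv hh_int 0
  have key := polar_cov H hH_int
  have step : ∀ θ t : ℝ, |t| • H (t * Real.cos θ, t * Real.sin θ)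
      = 𝓕 (radon (fun y => f y) θ) t * (|t| : ℝ) *
        Complex.exp (2 * (π : ℂ) * Complex.I * (t : ℂ) * ((⟪x, uVec θ⟫ : ℝ) : ℂ)) := by
    intro θ t
    have hHval : H (t * Real.cos θ, t * Real.sin θ) = h (t • uVec θ) := by
      rw [hH]; dsimp only; rw [coord_rot]
    rw [hHval, hh]
    dsimp only
    rw [← fourier_slice f θ t]
    have hiprod : ⟪t • uVec θ, x⟫ = t * ⟪x, uVec θ⟫ := by
      rw [real_inner_smul_left, real_inner_comm]
    rw [hiprod, Circle.smul_def, Real.fourierChar_apply]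
    rw [show ((2 * (π:ℂ) * Complex.I * (t:ℂ) * ((⟪x, uVec θ⟫ : ℝ) : ℂ)))
        = ((2 * π * (t * ⟪x, uVec θ⟫) : ℝ) : ℂ) * Complex.I by push_cast; ring]
    rw [smul_eq_mul, Complex.real_smul]
    ring
  calc f x = ∫ v, h v := hinv
    _ = ∫ p : ℝ × ℝ, H p := by
        rw [integral_mequiv 0 h]
    _ = ∫ θ in (0:ℝ)..π, ∫ t : ℝ, |t| • H (t * Real.cos θ, t * Real.sin θ) := key
    _ = _ := by
        refine intervalIntegral.integral_congr fun θ _ => ?_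
        exact integral_congr_ae (Filter.Eventually.of_forall fun t => step θ t)
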